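/- Let d be a squarefree positive integer, K = ℚ(√(-d)), O_K its ring of integers. Let x₁,…,xₙ ∈ O_K, x₀ ∈ O_K \ {0}, and y = 2·x₀·∏_{k=1}^n (3xₖ+1). If z ∈ O_K satisfies z + ∑_{k=1}^n xₖ/yᵏ ∈ ℚ, then z ∈ ℤ. -/

import Mathlib

open NumberField Complex

private lemma rat_int_of_isIntegral {q : ℚ} (h : IsIntegral ℤ ((q:ℂ))) : ∃ m : ℤ, (m:ℚ) = q := by
  have h2 : IsIntegral ℤ q := by
    have he : algebraMap ℚ ℂ q = (q:ℂ) := eq_ratCast _ q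
    rw [← he] at h
    exact (isIntegral_algebraMap_iff (algebraMap ℚ ℂ).injective).mp h
  obtain ⟨m, hm⟩ := IsIntegrallyClosed.isIntegral_iff.mp h2
  exact ⟨m, by simpa using hm⟩

private lemma gap_of_int {d : ℕ} (hd : 0 < d) {u v : ℚ} (hv : v ≠ 0) {a b : ℤ}
    (ha : (a:ℚ) = 2*u) (hb : (b:ℚ) = u^2 + v^2*d) : (3:ℚ)/4 ≤ v^2*d := by
  have hdQ : (0:ℚ) < d := by exact_mod_cast hd
  have hN : ((4*b - a^2 : ℤ):ℚ) = 4*(v^2*(d:ℚ)) := by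
    push_cast
    linear_combination 4*hb - ((a:ℚ)+2*u)*ha
  have hNpos : (0:ℤ) < 4*b - a^2 := by
    have h1 : (0:ℚ) < 4*(v^2*(d:ℚ)) := by positivity
    rw [← hN] at h1
    exact_mod_cast h1
  have hN3 : (3:ℤ) ≤ 4*b - a^2 := by
    rcases Int.even_or_odd a with ⟨c,hc⟩|⟨c,hc⟩
    · have h4 : 4*b - a^2 = 4*(b - c^2) := by rw [hc]; ring
      rw [h4] at hNpos ⊢; omega
    · have h4 : 4*b - a^2 = 4*(b - c^2 - c) - 1 := by rw [hc]; ring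
      rw [h4] at hNpos ⊢; omega
  have h5 : (3:ℚ) ≤ 4*(v^2*(d:ℚ)) := by rw [← hN]; exact_mod_cast hN3
  linarith

set_option maxHeartbeats 1600000 in
/-- Let `d` be a squarefree positive integer, `K = ℚ(√(-d))`, `𝓞 K` its ring of
integers. Let `x₁,…,xₙ ∈ 𝓞 K`, `x₀ ∈ 𝓞 K \ {0}`, and `y = 2·x₀·∏ (3xₖ+1)`.
If `z ∈ 𝓞 K` satisfies `z + ∑ xₖ/yᵏ ∈ ℚ`, then `z ∈ ℤ`. -/
theorem mem_int_of_add_sum_mem_rat (d : ℕ) (hd : Squarefree d) (hdpos : 0 < d)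
    (K : Type*) [Field K] [NumberField K] (hdeg : Module.finrank ℚ K = 2)
    (sqd : K) (hsqd : sqd ^ 2 = -(d : K))
    (n : ℕ) (x : Fin n → 𝓞 K) (x₀ : 𝓞 K) (hx₀ : x₀ ≠ 0)
    (y : 𝓞 K) (hy : y = 2 * x₀ * ∏ k, (3 * x k + 1))
    (z : 𝓞 K)
    (hz : ∃ q : ℚ, (z : K) + ∑ k, (x k : K) / (y : K) ^ ((k : ℕ) + 1)
            = algebraMap ℚ K q) :
    ∃ m : ℤ, (z : K) = m := by
  obtain ⟨q, hq⟩ := hz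
  obtain ⟨φ⟩ : Nonempty (K →+* ℂ) := inferInstance
  set s : ℂ := φ sqd with hs_def
  have hdR : (0:ℝ) < d := by exact_mod_cast hdpos
  have hs2 : s^2 = -(d:ℂ) := by rw [hs_def, ← map_pow, hsqd, map_neg, map_natCast]
  have h1 := congrArg Complex.re hs2
  have h2 := congrArg Complex.im hs2
  simp only [pow_two, Complex.mul_re, Complex.mul_im, Complex.neg_re, Complex.neg_im,
    Complex.natCast_re, Complex.natCast_im, neg_zero] at h1 h2
  have hsre : s.re = 0 := by
    by_cases him : s.im = 0
    · nlinarith [h1]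
    · rcases mul_eq_zero.mp (by linarith : s.re * s.im = 0) with h | h
      · exact h
      · exact absurd h him
  have hsim : s.im^2 = (d:ℝ) := by nlinarith [h1, hsre]
  -- decomposition of K
  have hdec : ∀ w : K, ∃ u v : ℚ, w = algebraMap ℚ K u + algebraMap ℚ K v * sqd := by
    have hd0 : (d:K) ≠ 0 := by
      exact_mod_cast Nat.cast_ne_zero.mpr hdpos.ne'
    have hsqd0 : sqd ≠ 0 := by
      intro h
      apply hd0
      have h2 : -(d:K) = 0 := by rw [← hsqd, h]; ring
      exact neg_eq_zero.mp h2
    have hli : LinearIndependent ℚ ![(1:K), sqd] := by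
      rw [linearIndependent_fin2]
      constructor
      · simpa using hsqd0
      · intro a ha
        simp only [Matrix.cons_val_one, Matrix.head_cons, Matrix.cons_val_zero] at ha
        have h2 : (algebraMap ℚ K) (a^2 * (-d)) = algebraMap ℚ K 1 := by
          rw [map_one]
          have h3 : (a • sqd)^2 = 1 := by rw [ha]; ring
          rw [Algebra.smul_def] at h3
          rw [← h3, mul_pow, map_mul, map_neg, map_pow]
          rw [hsqd, map_natCast]
        have h3 : a^2 * (-(d:ℚ)) = 1 := (algebraMap ℚ K).injective h2
        have h4 : (0:ℚ) < d := by exact_mod_cast hdpos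
        nlinarith [sq_nonneg a]
    have hspan : Submodule.span ℚ {(1:K), sqd} = ⊤ := by
      have hcard : Fintype.card (Fin 2) = Module.finrank ℚ K := by simp [hdeg]
      have hB := (basisOfLinearIndependentOfCardEqFinrank hli hcard).span_eq
      rw [coe_basisOfLinearIndependentOfCardEqFinrank] at hB
      have hrange : Set.range ![(1:K), sqd] = {(1:K), sqd} := by
        ext w
        simp [Fin.exists_fin_two, or_comm]
      rwa [hrange] at hB
    intro w
    have hw : w ∈ Submodule.span ℚ {(1:K), sqd} := by rw [hspan]; trivial
    obtain ⟨u, v, huv⟩ := Submodule.mem_span_pair.mp hw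
    exact ⟨u, v, by rw [← huv, Algebra.smul_def, Algebra.smul_def, mul_one]⟩
  -- pushing the decomposition through φ
  have hphiK : ∀ (w : K) (u v : ℚ), w = algebraMap ℚ K u + algebraMap ℚ K v * sqd →
      φ w = (u:ℂ) + (v:ℂ) * s := by
    intro w u v huv
    rw [huv, map_add, map_mul, ← hs_def]
    rw [eq_ratCast (algebraMap ℚ K) u, eq_ratCast (algebraMap ℚ K) v,
      map_ratCast φ u, map_ratCast φ v]
  have hphi : ∀ w : 𝓞 K, ∃ u v : ℚ, φ (w:K) = (u:ℂ) + (v:ℂ) * s := by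
    intro w
    obtain ⟨u, v, huv⟩ := hdec (w:K)
    exact ⟨u, v, hphiK _ u v huv⟩
  -- integrality
  have hint : ∀ w : 𝓞 K, IsIntegral ℤ (φ (w:K)) := fun w =>
    (RingOfIntegers.isIntegral_coe w).map φ.toIntAlgHom
  have hconj : ∀ w : 𝓞 K, IsIntegral ℤ ((starRingEnd ℂ) (φ (w:K))) := fun w =>
    (hint w).map (starRingEnd ℂ).toIntAlgHom
  have hcs : (starRingEnd ℂ) s = -s := by
    apply Complex.ext <;> simp [hsre]
  -- normSq identity
  have hnsq : ∀ (w : 𝓞 K) (u v : ℚ), φ (w:K) = (u:ℂ) + (v:ℂ) * s →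
      Complex.normSq (φ (w:K)) = (u:ℝ)^2 + (v:ℝ)^2*(d:ℝ) := by
    intro w u v huv
    rw [huv, Complex.normSq_apply]
    simp only [Complex.add_re, Complex.add_im, Complex.mul_re, Complex.mul_im,
      Complex.ratCast_re, Complex.ratCast_im, hsre, mul_zero, zero_mul, add_zero, zero_add,
      sub_zero]
    linear_combination (v:ℝ)^2 * hsim
  -- norm integer
  have hns_int : ∀ (w : 𝓞 K) (u v : ℚ), φ (w:K) = (u:ℂ) + (v:ℂ) * s →
      ∃ m : ℤ, (m:ℚ) = u^2 + v^2*d := by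
    intro w u v huv
    have hm : IsIntegral ℤ (φ (w:K) * (starRingEnd ℂ) (φ (w:K))) := (hint w).mul (hconj w)
    have he : φ (w:K) * (starRingEnd ℂ) (φ (w:K)) = ((u^2 + v^2*d : ℚ):ℂ) := by
      rw [Complex.mul_conj, hnsq w u v huv]
      push_cast
      ring
    rw [he] at hm
    exact rat_int_of_isIntegral hm
  -- trace integer
  have htr_int : ∀ (w : 𝓞 K) (u v : ℚ), φ (w:K) = (u:ℂ) + (v:ℂ) * s →
      ∃ a : ℤ, (a:ℚ) = 2*u := by
    intro w u v huv
    have hm : IsIntegral ℤ (φ (w:K) + (starRingEnd ℂ) (φ (w:K))) := (hint w).add (hconj w)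
    have he : φ (w:K) + (starRingEnd ℂ) (φ (w:K)) = ((2*u : ℚ):ℂ) := by
      rw [huv, map_add, map_mul, hcs, map_ratCast, map_ratCast]
      push_cast
      ring
    rw [he] at hm
    exact rat_int_of_isIntegral hm
  -- |φ w| ≥ 1 for nonzero w
  have habs1 : ∀ w : 𝓞 K, w ≠ 0 → 1 ≤ ‖φ (w:K)‖ := by
    intro w hw
    obtain ⟨u, v, huv⟩ := hphi w
    obtain ⟨m, hm⟩ := hns_int w u v huv
    have hKne : ((w:K)) ≠ 0 := RingOfIntegers.coe_ne_zero_iff.mpr hw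
    have hne : φ (w:K) ≠ 0 := by
      simpa using (map_ne_zero φ).mpr hKne
    have hpos : 0 < Complex.normSq (φ (w:K)) := Complex.normSq_pos.mpr hne
    have hmR : (m:ℝ) = Complex.normSq (φ (w:K)) := by
      rw [hnsq w u v huv]
      exact_mod_cast congrArg (Rat.cast : ℚ → ℝ) hm
    have hm1 : (1:ℤ) ≤ m := by
      have h0 : (0:ℝ) < (m:ℝ) := by rw [hmR]; exact hpos
      have : (0:ℤ) < m := by exact_mod_cast h0
      omega
    have hns1 : (1:ℝ) ≤ Complex.normSq (φ (w:K)) := by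
      rw [← hmR]; exact_mod_cast hm1
    nlinarith [norm_nonneg (φ (w:K)), Complex.sq_norm (φ (w:K))]
  set S : K := ∑ k, (x k : K) / (y : K) ^ ((k : ℕ) + 1) with hS_def
  -- the factors of y
  set c : Fin n → ℝ := fun k => ‖φ ((3 * x k + 1 : 𝓞 K):K)‖ with hc_def
  have htri : ∀ k, 3 * ‖φ ((x k : K))‖ ≤ c k + 1 := by
    intro k
    have he : ((3 * x k + 1 : 𝓞 K):K) = 3*((x k : K)) + 1 := by
      show algebraMap (𝓞 K) K (3 * x k + 1) = 3 * algebraMap (𝓞 K) K (x k) + 1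
      rw [map_add, map_mul, map_one, map_ofNat]
    have he2 : φ ((3 * x k + 1 : 𝓞 K):K) + (-1) = 3 * φ ((x k : K)) := by
      rw [he, map_add, map_mul, map_one, map_ofNat]
      ring
    have h4 := norm_add_le (φ ((3 * x k + 1 : 𝓞 K):K)) (-1)
    rw [he2] at h4
    have h5 : ‖3 * φ ((x k:K))‖ = 3 * ‖φ ((x k:K))‖ := by
      rw [norm_mul]
      norm_num
    have habsneg : ‖(-1 : ℂ)‖ = 1 := by norm_num
    rw [h5, habsneg] at h4
    simp only [hc_def]
    exact h4
  have hc1 : ∀ k, 1 ≤ c k := by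
    intro k
    by_cases hxk : x k = 0
    · simp [hc_def, hxk]
    · have ht := habs1 (x k) hxk
      linarith [htri k]
  set A0 : ℝ := ‖φ ((x₀:K))‖ with hA0_def
  have hA0 : 1 ≤ A0 := habs1 x₀ hx₀
  set Y : ℝ := ‖φ ((y:K))‖ with hY_def
  have hyK : ((y:K)) = 2*((x₀:K))*∏ k, ((3*(x k)+1 : 𝓞 K):K) := by
    rw [hy]
    show algebraMap (𝓞 K) K _ = _
    rw [map_mul, map_mul, map_prod, map_ofNat]
  have hY : Y = 2 * A0 * ∏ k, c k := by
    rw [hY_def, hyK, map_mul, map_mul, map_prod, norm_mul, norm_mul, norm_prod, map_ofNat φ 2]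
    simp only [hA0_def, hc_def]
    norm_num
  have hprodge1' : ∀ t : Finset (Fin n), (1:ℝ) ≤ ∏ j ∈ t, c j := by
    intro t
    calc (1:ℝ) = ∏ _j ∈ t, (1:ℝ) := by simp
    _ ≤ ∏ j ∈ t, c j := Finset.prod_le_prod (by simp) (fun j _ => hc1 j)
  have hprodge1 : (1:ℝ) ≤ ∏ j, c j := hprodge1' Finset.univ
  have hprod1 : ∀ k, c k ≤ ∏ j, c j := by
    intro k
    rw [← Finset.mul_prod_erase Finset.univ c (Finset.mem_univ k)]
    nth_rewrite 1 [← mul_one (c k)]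
    exact mul_le_mul_of_nonneg_left (hprodge1' _) (by linarith [hc1 k])
  have hp0 : (0:ℝ) ≤ ∏ j, c j := le_trans zero_le_one hprodge1
  have hAp : ∏ j, c j ≤ A0 * ∏ j, c j := by
    calc ∏ j, c j = 1 * ∏ j, c j := (one_mul _).symm
    _ ≤ A0 * ∏ j, c j := mul_le_mul_of_nonneg_right hA0 hp0
  have hY2 : 2 ≤ Y := by
    rw [hY, mul_assoc]
    linarith [hprodge1, hAp]
  have hYck : ∀ k, 2 * c k ≤ Y := by
    intro k
    rw [hY, mul_assoc]
    linarith [hprod1 k, hAp]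
  have hxkY : ∀ k, ‖φ ((x k : K))‖ ≤ Y/3 := by
    intro k
    have h1 := htri k
    have h2 := hYck k
    linarith
  -- bound on the sum
  have hφS : φ S = ∑ k, φ ((x k:K)) / (φ ((y:K)))^((k:ℕ)+1) := by
    rw [hS_def, map_sum]
    exact Finset.sum_congr rfl fun k _ => by rw [map_div₀, map_pow]
  have habsS : ‖φ S‖ ≤ 2/3 := by
    rw [hφS]
    have step1 := norm_sum_le Finset.univ (fun k : Fin n => φ ((x k:K)) / (φ ((y:K)))^((k:ℕ)+1))
    refine le_trans step1 ?_
    have step2 : ∀ k : Fin n, ‖φ ((x k:K)) / (φ ((y:K)))^((k:ℕ)+1)‖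
        ≤ (1/3) * (1/2:ℝ)^(k:ℕ) := by
      intro k
      have hYpos : (0:ℝ) < Y := by linarith
      have heq : ‖φ ((x k:K)) / (φ ((y:K)))^((k:ℕ)+1)‖
          = ‖φ ((x k:K))‖ / Y^((k:ℕ)+1) := by
        rw [norm_div, norm_pow, hY_def]
      rw [heq]
      have hstep : ‖φ ((x k:K))‖ / Y^((k:ℕ)+1) ≤ (Y/3) / Y^((k:ℕ)+1) := by
        gcongr
        exact hxkY k
      refine le_trans hstep ?_
      have hYne : Y ≠ 0 := ne_of_gt hYpos
      have heq2 : (Y/3) / Y^((k:ℕ)+1) = (1/3)*(1/Y)^(k:ℕ) := by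
        rw [pow_succ, div_pow, one_pow]
        field_simp
      rw [heq2]
      have hhalf : (1/Y) ≤ (1/2:ℝ) := one_div_le_one_div_of_le (by norm_num) hY2
      have hpow : (1/Y)^(k:ℕ) ≤ (1/2:ℝ)^(k:ℕ) := pow_le_pow_left₀ (by positivity) hhalf _
      linarith [hpow]
    refine le_trans (Finset.sum_le_sum fun k _ => step2 k) ?_
    rw [← Finset.mul_sum]
    have := sum_geometric_two_le n
    have hfin : ∑ k : Fin n, (1/2:ℝ)^(k:ℕ) = ∑ i ∈ Finset.range n, (1/2:ℝ)^i :=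
      Fin.sum_univ_eq_sum_range (fun i => (1/2:ℝ)^i) n
    rw [hfin]
    linarith
  -- final assembly
  obtain ⟨u, v, huvK⟩ := hdec ((z:K))
  have huv : φ ((z:K)) = (u:ℂ) + (v:ℂ)*s := hphiK _ u v huvK
  by_cases hv : v = 0
  · rw [hv, map_zero, zero_mul, add_zero] at huvK
    rw [hv] at huv
    have h1 : IsIntegral ℤ ((u:ℚ):ℂ) := by
      have h2 := hint z
      rw [huv] at h2
      simpa using h2
    obtain ⟨m, hm⟩ := rat_int_of_isIntegral h1
    refine ⟨m, ?_⟩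
    rw [huvK, ← hm, eq_ratCast, Rat.cast_intCast]
  · exfalso
    obtain ⟨a, ha⟩ := htr_int z u v huv
    obtain ⟨b, hb⟩ := hns_int z u v huv
    have hgap := gap_of_int hdpos hv ha hb
    have hqC : φ ((z:K)) + φ S = ((q:ℚ):ℂ) := by
      rw [← map_add, hq, eq_ratCast (algebraMap ℚ K) q, map_ratCast]
    have him0 : (φ ((z:K))).im = -(φ S).im := by
      have h6 := congrArg Complex.im hqC
      simp only [Complex.add_im, Complex.ratCast_im] at h6
      linarith
    have himz : (φ ((z:K))).im = (v:ℝ) * s.im := by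
      rw [huv]
      simp [Complex.add_im, Complex.mul_im, hsre]
    have hsmall : |(φ S).im| ≤ 2/3 := le_trans (Complex.abs_im_le_norm _) habsS
    have h34 : (3/4:ℝ) ≤ ((v:ℝ)*s.im)^2 := by
      have h7 : ((v:ℝ)*s.im)^2 = (v:ℝ)^2 * (d:ℝ) := by
        rw [mul_pow, hsim]
      have hgR := (Rat.cast_le (K := ℝ)).mpr hgap
      push_cast at hgR
      rw [h7]
      linarith [hgR]
    have h8 := abs_le.mp hsmall
    nlinarith [him0, himz, h34, h8.1, h8.2]
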